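/- With ω = e^{2πi/3}, G = diag(1, ω², ω²), R = H·G·Hᴴ and H the qutrit Hadamard, one also has H = c′ · R·G·R for some nonzero complex scalar c′ (non-uniqueness of the Euler decomposition). -/
import Mathlib

noncomputable def ω : ℂ := Complex.exp (2 * Real.pi * Complex.I / 3)

lemma hprim : IsPrimitiveRoot ω 3 := by
  have := Complex.isPrimitiveRoot_exp 3 (by norm_num)
  simpa [ω] using this

lemma hω3 : ω ^ 3 = 1 := hprim.pow_eq_one

lemma hωne : ω ≠ 0 := by
  intro h
  have := hω3
  rw [h] at this
  norm_num at this

lemma hstar : (starRingEnd ℂ) ω = ω ^ 2 := by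
  have h : (starRingEnd ℂ) ω * ω = 1 := by
    rw [ω, ← Complex.exp_conj, ← Complex.exp_add]
    rw [show (starRingEnd ℂ) (2 * ↑Real.pi * Complex.I / 3) + 2 * ↑Real.pi * Complex.I / 3 = 0 by
      simp [map_div₀, map_ofNat, Complex.conj_I, Complex.conj_ofReal]; ring]
    exact Complex.exp_zero
  have h2 : ω ^ 2 * ω = 1 := by rw [← pow_succ]; exact hω3
  exact mul_right_cancel₀ hωne (h.trans h2.symm)

lemma him : ω.im = Real.sqrt 3 / 2 := by
  have harg : (2 * (Real.pi : ℂ) * Complex.I / 3) = ((2 * Real.pi / 3 : ℝ) : ℂ) * Complex.I := by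
    push_cast; ring
  rw [ω, harg, Complex.exp_ofReal_mul_I_im]
  rw [show (2 * Real.pi / 3) = Real.pi - Real.pi / 3 by ring, Real.sin_pi_sub,
    Real.sin_pi_div_three]

lemma hI : (Real.sqrt 3 : ℂ) * Complex.I = ω - ω ^ 2 := by
  rw [← hstar, Complex.sub_conj, him]
  push_cast
  ring

noncomputable def H : Matrix (Fin 3) (Fin 3) ℂ :=
  Matrix.of fun j k => (1 / Real.sqrt 3 : ℂ) * ω ^ (j.val * k.val)

noncomputable def G : Matrix (Fin 3) (Fin 3) ℂ :=
  Matrix.diagonal ![1, ω ^ 2, ω ^ 2]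

noncomputable def R : Matrix (Fin 3) (Fin 3) ℂ :=
  H * G * H.conjTranspose


lemma hq2 : ω ^ 2 = -1 - ω := by
  have h1 : ω ≠ 1 := hprim.ne_one (by norm_num)
  have h : (ω - 1) * (ω ^ 2 + ω + 1) = 0 := by linear_combination hω3
  rcases mul_eq_zero.mp h with h | h
  · exact absurd (sub_eq_zero.mp h) h1
  · linear_combination h

lemma hsne : ((Real.sqrt 3 : ℂ)) ≠ 0 := Complex.ofReal_ne_zero.mpr (by positivity)

lemma hIinv : Complex.I = (ω - ω ^ 2) * ((Real.sqrt 3 : ℂ))⁻¹ := by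
  rw [← hI]; field_simp

lemma hpw : ∀ n, ω ^ (n + 3) = ω ^ n := fun n => by
  rw [pow_add, hω3, mul_one]
lemma hw3 : ω ^ 3 = ω ^ 0 := by simpa using hpw 0
lemma hw4 : ω ^ 4 = ω ^ 1 := by simpa using hpw 1
lemma hw5 : ω ^ 5 = ω ^ 2 := by simpa using hpw 2
lemma hw6 : ω ^ 6 = ω ^ 3 := by simpa using hpw 3
lemma hw7 : ω ^ 7 = ω ^ 4 := by simpa using hpw 4
lemma hw8 : ω ^ 8 = ω ^ 5 := by simpa using hpw 5
lemma hw9 : ω ^ 9 = ω ^ 6 := by simpa using hpw 6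
lemma hw10 : ω ^ 10 = ω ^ 7 := by simpa using hpw 7
lemma hw11 : ω ^ 11 = ω ^ 8 := by simpa using hpw 8
lemma hw12 : ω ^ 12 = ω ^ 9 := by simpa using hpw 9
lemma hw13 : ω ^ 13 = ω ^ 10 := by simpa using hpw 10
lemma hw14 : ω ^ 14 = ω ^ 11 := by simpa using hpw 11
lemma hw15 : ω ^ 15 = ω ^ 12 := by simpa using hpw 12
lemma hw16 : ω ^ 16 = ω ^ 13 := by simpa using hpw 13
lemma hw17 : ω ^ 17 = ω ^ 14 := by simpa using hpw 14
lemma hw18 : ω ^ 18 = ω ^ 15 := by simpa using hpw 15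
lemma hw19 : ω ^ 19 = ω ^ 16 := by simpa using hpw 16
lemma hw20 : ω ^ 20 = ω ^ 17 := by simpa using hpw 17
lemma hw21 : ω ^ 21 = ω ^ 18 := by simpa using hpw 18
lemma hw22 : ω ^ 22 = ω ^ 19 := by simpa using hpw 19
lemma hw23 : ω ^ 23 = ω ^ 20 := by simpa using hpw 20
lemma hw24 : ω ^ 24 = ω ^ 21 := by simpa using hpw 21
lemma hw25 : ω ^ 25 = ω ^ 22 := by simpa using hpw 22
lemma hw26 : ω ^ 26 = ω ^ 23 := by simpa using hpw 23
lemma hw27 : ω ^ 27 = ω ^ 24 := by simpa using hpw 24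
lemma hw28 : ω ^ 28 = ω ^ 25 := by simpa using hpw 25
lemma hw29 : ω ^ 29 = ω ^ 26 := by simpa using hpw 26
lemma hw30 : ω ^ 30 = ω ^ 27 := by simpa using hpw 27
lemma hw31 : ω ^ 31 = ω ^ 28 := by simpa using hpw 28
lemma hw32 : ω ^ 32 = ω ^ 29 := by simpa using hpw 29
lemma hw33 : ω ^ 33 = ω ^ 30 := by simpa using hpw 30
lemma hw34 : ω ^ 34 = ω ^ 31 := by simpa using hpw 31
lemma hw35 : ω ^ 35 = ω ^ 32 := by simpa using hpw 32
lemma hw36 : ω ^ 36 = ω ^ 33 := by simpa using hpw 33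
lemma hw37 : ω ^ 37 = ω ^ 34 := by simpa using hpw 34
lemma hw38 : ω ^ 38 = ω ^ 35 := by simpa using hpw 35
lemma hw39 : ω ^ 39 = ω ^ 36 := by simpa using hpw 36
lemma hw40 : ω ^ 40 = ω ^ 37 := by simpa using hpw 37

lemma hsq : ((Real.sqrt 3 : ℂ)) ^ 2 = 3 := by
  rw [← Complex.ofReal_pow, Real.sq_sqrt (by norm_num : (3:ℝ) ≥ 0)]
  norm_num

lemma hsi : ((Real.sqrt 3 : ℂ))⁻¹ = (Real.sqrt 3 : ℂ) / 3 := by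
  rw [inv_eq_one_div, div_eq_div_iff hsne (by norm_num)]
  linear_combination -hsq

lemma hspw : ∀ n, ((Real.sqrt 3 : ℂ)) ^ (n + 2) = 3 * ((Real.sqrt 3 : ℂ)) ^ n := fun n => by
  rw [pow_add, hsq]; ring
lemma hs2 : ((Real.sqrt 3 : ℂ)) ^ 2 = 3 * ((Real.sqrt 3 : ℂ)) ^ 0 := by simpa using hspw 0
lemma hs3 : ((Real.sqrt 3 : ℂ)) ^ 3 = 3 * ((Real.sqrt 3 : ℂ)) ^ 1 := by simpa using hspw 1
lemma hs4 : ((Real.sqrt 3 : ℂ)) ^ 4 = 3 * ((Real.sqrt 3 : ℂ)) ^ 2 := by simpa using hspw 2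
lemma hs5 : ((Real.sqrt 3 : ℂ)) ^ 5 = 3 * ((Real.sqrt 3 : ℂ)) ^ 3 := by simpa using hspw 3
lemma hs6 : ((Real.sqrt 3 : ℂ)) ^ 6 = 3 * ((Real.sqrt 3 : ℂ)) ^ 4 := by simpa using hspw 4
lemma hs7 : ((Real.sqrt 3 : ℂ)) ^ 7 = 3 * ((Real.sqrt 3 : ℂ)) ^ 5 := by simpa using hspw 5
lemma hs8 : ((Real.sqrt 3 : ℂ)) ^ 8 = 3 * ((Real.sqrt 3 : ℂ)) ^ 6 := by simpa using hspw 6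
lemma hs9 : ((Real.sqrt 3 : ℂ)) ^ 9 = 3 * ((Real.sqrt 3 : ℂ)) ^ 7 := by simpa using hspw 7
lemma hs10 : ((Real.sqrt 3 : ℂ)) ^ 10 = 3 * ((Real.sqrt 3 : ℂ)) ^ 8 := by simpa using hspw 8
lemma hs11 : ((Real.sqrt 3 : ℂ)) ^ 11 = 3 * ((Real.sqrt 3 : ℂ)) ^ 9 := by simpa using hspw 9
lemma hs12 : ((Real.sqrt 3 : ℂ)) ^ 12 = 3 * ((Real.sqrt 3 : ℂ)) ^ 10 := by simpa using hspw 10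
lemma hs13 : ((Real.sqrt 3 : ℂ)) ^ 13 = 3 * ((Real.sqrt 3 : ℂ)) ^ 11 := by simpa using hspw 11
lemma hs14 : ((Real.sqrt 3 : ℂ)) ^ 14 = 3 * ((Real.sqrt 3 : ℂ)) ^ 12 := by simpa using hspw 12

set_option maxHeartbeats 3200000 in
theorem euler_decomposition_alt : ∃ c : ℂ, c ≠ 0 ∧ H = c • (R * G * R) := by
  refine ⟨Complex.I, Complex.I_ne_zero, ?_⟩
  ext i j
  fin_cases i <;> fin_cases j <;>
    simp [H, G, R, Matrix.mul_apply, Matrix.conjTranspose_apply, Fin.sum_univ_three, hstar,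
      Matrix.smul_apply, Matrix.of_apply, Matrix.diagonal, Matrix.cons_val_zero,
      Matrix.cons_val_one, Matrix.head_cons] <;>
  rw [hIinv] <;>
  simp only [← pow_mul, Nat.reduceMul, hw40, hw39, hw38, hw37, hw36, hw35, hw34, hw33, hw32,
    hw31, hw30, hw29, hw28, hw27, hw26, hw25, hw24, hw23, hw22, hw21, hw20, hw19, hw18, hw17,
    hw16, hw15, hw14, hw13, hw12, hw11, hw10, hw9, hw8, hw7, hw6, hw5, hw4, hw3, pow_one] <;>
  field_simp <;>
  ring_nf <;>
  simp only [hw40, hw39, hw38, hw37, hw36, hw35, hw34, hw33, hw32, hw31, hw30, hw29, hw28,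
    hw27, hw26, hw25, hw24, hw23, hw22, hw21, hw20, hw19, hw18, hw17, hw16, hw15, hw14, hw13,
    hw12, hw11, hw10, hw9, hw8, hw7, hw6, hw5, hw4, hw3, hs14, hs13, hs12, hs11, hs10, hs9,
    hs8, hs7, hs6, hs5, hs4, hs3, hs2, pow_zero, pow_one, one_mul, mul_one] <;>
  simp only [hq2, hsi] <;>
  ring_nf <;>
  simp only [hs14, hs13, hs12, hs11, hs10, hs9, hs8, hs7, hs6, hs5, hs4, hs3, hs2,
    pow_zero, pow_one, one_mul, mul_one] <;>
  ring
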